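/- Let Δ : [0,∞) → ℝ be continuous and γ > 0, and let x : [0,∞) → ℝ be differentiable with x'(t) = −γ·Δ(t)²·x(t) for all t ≥ 0. Then for all t_b ≥ t_a ≥ 0, |x(t_b)| ≤ |x(t_a)|. -/

import Mathlib

/-- Feature F3: Monotonicity of `|x|` along solutions of the
DREM error equation `x' = -γ Δ(t)² x`. -/
theorem drem_error_monotone (Δ x : ℝ → ℝ) (γ : ℝ) (hγ : 0 < γ)
    (hΔ : Continuous Δ)
    (hx : ∀ t, 0 ≤ t → HasDerivAt x (-γ * (Δ t) ^ 2 * x t) t) :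
    ∀ ta tb : ℝ, 0 ≤ ta → ta ≤ tb → |x tb| ≤ |x ta| := by
  have hsq : ∀ t, 0 ≤ t →
      HasDerivAt (fun s => (x s) ^ 2) (2 * x t ^ 1 * (-γ * (Δ t) ^ 2 * x t)) t := by
    intro t ht
    simpa using (hx t ht).fun_pow 2
  have key : AntitoneOn (fun t => (x t) ^ 2) (Set.Ici 0) := by
    apply antitoneOn_of_deriv_nonpos (convex_Ici 0)
    · intro t ht
      exact ((hsq t ht).continuousAt).continuousWithinAt
    · intro t ht
      rw [interior_Ici] at ht
      exact (hsq t (le_of_lt ht)).differentiableAt.differentiableWithinAt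
    · intro t ht
      rw [interior_Ici] at ht
      rw [(hsq t (le_of_lt ht)).deriv]
      nlinarith [sq_nonneg (Δ t * x t), hγ.le]
  intro ta tb hta htab
  have h := key (Set.mem_Ici.mpr hta) (Set.mem_Ici.mpr (hta.trans htab)) htab
  simp only at h
  nlinarith [sq_abs (x ta), sq_abs (x tb), abs_nonneg (x tb), abs_nonneg (x ta)]
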